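/- Let J, H be Hilbert spaces, K ∈ B(J,H), {gₙ} a Bessel sequence in H, and {kₙ} a Bessel sequence in J such that Kf = ∑ₙ ⟨f, kₙ⟩_J gₙ for all f ∈ J. Then {gₙ} is a K-frame: there exist α, β > 0 with α‖K* f‖_J² ≤ ∑ₙ |⟨f, gₙ⟩_H|² ≤ β‖f‖_H² for all f ∈ H. -/

import Mathlib

open scoped ComplexInnerProductSpace

/-- Let `J, H` be Hilbert spaces, `K ∈ B(J,H)`, `{gₙ}` a Bessel sequence in `H`, and `{kₙ}`
a Bessel sequence in `J` such that `Kf = ∑ₙ ⟨f, kₙ⟩_J gₙ` for all `f ∈ J`. Then `{gₙ}` is a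
`K`-frame: there exist `α, β > 0` with `α‖K* f‖_J² ≤ ∑ₙ |⟨f, gₙ⟩_H|² ≤ β‖f‖_H²` for all
`f ∈ H`. (The paper's `⟨f, kₙ⟩`, linear in `f`, is `⟪kₙ, f⟫` in Mathlib.) -/
theorem stmt_14 {J H : Type*}
    [NormedAddCommGroup J] [InnerProductSpace ℂ J] [CompleteSpace J]
    [NormedAddCommGroup H] [InnerProductSpace ℂ H] [CompleteSpace H]
    (K : J →L[ℂ] H) (g : ℕ → H) (k : ℕ → J)
    (cg : ℝ) (hcg : 0 < cg)
    (hBesselg : ∀ x : H, (Summable fun n => ‖⟪x, g n⟫‖ ^ 2) ∧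
      ∑' n, ‖⟪x, g n⟫‖ ^ 2 ≤ cg * ‖x‖ ^ 2)
    (ck : ℝ) (hck : 0 < ck)
    (hBesselk : ∀ x : J, (Summable fun n => ‖⟪x, k n⟫‖ ^ 2) ∧
      ∑' n, ‖⟪x, k n⟫‖ ^ 2 ≤ ck * ‖x‖ ^ 2)
    (hrep : ∀ f : J, HasSum (fun n => ⟪k n, f⟫ • g n) (K f)) :
    ∃ α β : ℝ, 0 < α ∧ 0 < β ∧ ∀ f : H,
      α * ‖ContinuousLinearMap.adjoint K f‖ ^ 2 ≤ ∑' n, ‖⟪f, g n⟫‖ ^ 2 ∧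
      ∑' n, ‖⟪f, g n⟫‖ ^ 2 ≤ β * ‖f‖ ^ 2 := by
  refine ⟨1 / ck, cg, by positivity, hcg, fun f => ?_⟩
  refine ⟨?_, (hBesselg f).2⟩
  set u := ContinuousLinearMap.adjoint K f with hu
  -- the representation of ⟪f, K u⟫ as a sum
  have h1 : HasSum (fun n => ⟪f, ⟪k n, u⟫ • g n⟫) ⟪f, K u⟫ :=
    (hrep u).mapL (innerSL ℂ f)
  -- bound each term
  set a : ℕ → ℝ := fun n => ‖⟪u, k n⟫‖ with ha
  set b : ℕ → ℝ := fun n => ‖⟪f, g n⟫‖ with hb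
  have hterm : ∀ n, ‖⟪f, ⟪k n, u⟫ • g n⟫‖ = a n * b n := by
    intro n
    rw [inner_smul_right, norm_mul, ha, hb, norm_inner_symm]
  have hSa : Summable (fun n => a n ^ 2) := (hBesselk u).1
  have hSb : Summable (fun n => b n ^ 2) := (hBesselg f).1
  have hbound : ∀ n, a n * b n ≤ (1 / (2 * ck)) * a n ^ 2 + (ck / 2) * b n ^ 2 := by
    intro n
    rw [show (1 / (2 * ck)) * a n ^ 2 + (ck / 2) * b n ^ 2
        = (a n ^ 2 + ck ^ 2 * b n ^ 2) / (2 * ck) by field_simp,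
      le_div_iff₀ (by positivity)]
    nlinarith [sq_nonneg (a n - ck * b n)]
  have hSmaj : Summable (fun n => (1 / (2 * ck)) * a n ^ 2 + (ck / 2) * b n ^ 2) :=
    (hSa.mul_left _).add (hSb.mul_left _)
  have hSab : Summable (fun n => a n * b n) := by
    refine Summable.of_nonneg_of_le (fun n => by positivity) hbound hSmaj
  -- ‖u‖² ≤ ∑ aₙ bₙ
  have h2 : ‖u‖ ^ 2 ≤ ∑' n, a n * b n := by
    have hadj : (⟪u, u⟫ : ℂ) = ⟪f, K u⟫ := by
      rw [hu]; exact ContinuousLinearMap.adjoint_inner_left K u f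
    have : ‖u‖ ^ 2 = ‖(⟪u, u⟫ : ℂ)‖ := by
      rw [inner_self_eq_norm_sq_to_K, norm_pow, RCLike.norm_ofReal, abs_norm]
    rw [this, hadj, ← h1.tsum_eq]
    calc ‖∑' n, ⟪f, ⟪k n, u⟫ • g n⟫‖ ≤ ∑' n, ‖⟪f, ⟪k n, u⟫ • g n⟫‖ := by
          apply norm_tsum_le_tsum_norm
          exact hSab.congr (fun n => (hterm n).symm)
      _ = ∑' n, a n * b n := by simp_rw [hterm]
  -- conclude
  have h3 : ∑' n, a n * b n ≤ (1 / (2 * ck)) * (∑' n, a n ^ 2) + (ck / 2) * (∑' n, b n ^ 2) := by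
    calc ∑' n, a n * b n ≤ ∑' n, ((1 / (2 * ck)) * a n ^ 2 + (ck / 2) * b n ^ 2) :=
          Summable.tsum_le_tsum hbound hSab hSmaj
      _ = (1 / (2 * ck)) * (∑' n, a n ^ 2) + (ck / 2) * (∑' n, b n ^ 2) := by
          rw [Summable.tsum_add (hSa.mul_left _) (hSb.mul_left _), tsum_mul_left, tsum_mul_left]
  have h4 : ∑' n, a n ^ 2 ≤ ck * ‖u‖ ^ 2 := (hBesselk u).2
  have h5 : ‖u‖ ^ 2 ≤ ck * ∑' n, b n ^ 2 := by
    have := h2.trans h3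
    have hck' : (1 / (2 * ck)) * (∑' n, a n ^ 2) ≤ ‖u‖ ^ 2 / 2 := by
      rw [div_mul_eq_mul_div, one_mul, div_le_div_iff₀ (by positivity) two_pos]
      calc (∑' n, a n ^ 2) * 2 ≤ ck * ‖u‖ ^ 2 * 2 := by linarith
        _ = ‖u‖ ^ 2 * (2 * ck) := by ring
    linarith
  rw [div_mul_eq_mul_div, one_mul, div_le_iff₀ hck]
  calc ‖u‖ ^ 2 ≤ ck * ∑' n, b n ^ 2 := h5
    _ = (∑' n, b n ^ 2) * ck := mul_comm _ _
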